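/- Let r ≤ n, let v₀ ∈ 𝔽₂^r be nonzero, and let v₁, …, v_n ∈ 𝔽₂^r. Suppose I ⊆ [n] with |I| = r−2 and 1,2,3 ∉ I (after relabeling), and suppose that for all 1 ≤ i < j ≤ 3 the multiset {v_i, v_j} ∪ {v_m : m ∈ I} is a basis of 𝔽₂^r, and for all 1 ≤ i ≤ 3 the multiset {v₀, v_i} ∪ {v_m : m ∈ I} is a basis of 𝔽₂^r. Then a contradiction follows (no such configuration exists). -/

import Mathlib

section Aux

variable {n r : ℕ} (v : Fin n → (Fin r → ZMod 2))

lemma stmt10_key {T : Finset (Fin n)}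
    (hLI : LinearIndependent (ZMod 2) (fun m : ↥T => v m))
    {J : Set (Fin n)} {i : Fin n} (hJT : J ⊆ ↑T) (hiT : i ∈ T) (hiJ : i ∉ J) :
    v i ∉ Submodule.span (ZMod 2) (v '' J) := by
  have h1 : v '' J = (fun m : ↥T => v m) '' (Subtype.val ⁻¹' J) := by
    ext x
    simp only [Set.mem_image, Set.mem_preimage, Subtype.exists, exists_and_right]
    constructor
    · rintro ⟨j, hjJ, rfl⟩; exact ⟨j, ⟨hJT hjJ, hjJ⟩, rfl⟩
    · rintro ⟨j, ⟨hjT, hjJ⟩, rfl⟩; exact ⟨j, hjJ, rfl⟩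
  have h2 : (⟨i, hiT⟩ : ↥T) ∉ (Subtype.val ⁻¹' J) := hiJ
  have := hLI.notMem_span_image h2
  rwa [h1]

end Aux

/-- Let r ≤ n, v₀ ∈ 𝔽₂^r nonzero, v₁,…,v_n ∈ 𝔽₂^r, and I ⊆ [n] with |I| = r-2 not
containing the three (relabeled) indices a, b, c. If for all pairs i ≠ j among
{a,b,c} the family {v_i, v_j} ∪ {v_m : m ∈ I} is a basis of 𝔽₂^r, and for each
i ∈ {a,b,c} the family {v₀, v_i} ∪ {v_m : m ∈ I} is a basis of 𝔽₂^r, then a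
contradiction follows. -/
theorem stmt10 (n r : ℕ) (hrn : r ≤ n) (v₀ : Fin r → ZMod 2) (hv₀ : v₀ ≠ 0)
    (v : Fin n → (Fin r → ZMod 2)) (I : Finset (Fin n)) (hI : I.card = r - 2)
    (a b c : Fin n) (hab : a ≠ b) (hac : a ≠ c) (hbc : b ≠ c)
    (haI : a ∉ I) (hbI : b ∉ I) (hcI : c ∉ I)
    (hpair : ∀ i j : Fin n, i ∈ ({a, b, c} : Set (Fin n)) → j ∈ ({a, b, c} : Set (Fin n)) →
      i ≠ j →
      LinearIndependent (ZMod 2) (fun m : ↥(insert i (insert j I) : Finset (Fin n)) => v m) ∧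
      Submodule.span (ZMod 2)
        (Set.range (fun m : ↥(insert i (insert j I) : Finset (Fin n)) => v m)) = ⊤)
    (hzero : ∀ i : Fin n, i ∈ ({a, b, c} : Set (Fin n)) →
      LinearIndependent (ZMod 2)
        (fun m : Option ↥(insert i I : Finset (Fin n)) => m.elim v₀ (fun j => v j)) ∧
      Submodule.span (ZMod 2)
        (Set.range (fun m : Option ↥(insert i I : Finset (Fin n)) =>
          m.elim v₀ (fun j => v j))) = ⊤) :
    False := by
  classical
  set S := Submodule.span (ZMod 2) (v '' ↑I) with hSdef
  have two : ∀ x : ZMod 2, x = 0 ∨ x = 1 := by decide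
  -- independence of pairs modulo S
  have pairInd : ∀ i j : Fin n, i ∉ I → j ∉ I → i ≠ j →
      LinearIndependent (ZMod 2)
        (fun m : ↥(insert i (insert j I) : Finset (Fin n)) => v m) →
      ∀ x y : ZMod 2, x • v i + y • v j ∈ S → x = 0 ∧ y = 0 := by
    intro i j hiI hjI hij hLI x y hxy
    have hT : (↑I : Set (Fin n)) ⊆ ↑(insert i (insert j I) : Finset (Fin n)) := by
      intro m hm; simp only [Finset.coe_insert, Set.mem_insert_iff]
      right; right; exact hm
    have hiT : i ∈ insert i (insert j I) := by simp
    have hjT : j ∈ insert i (insert j I) := by simp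
    rcases two x with rfl | rfl <;> rcases two y with rfl | rfl
    · exact ⟨rfl, rfl⟩
    · exfalso
      apply stmt10_key v hLI hT hjT hjI
      simpa using hxy
    · exfalso
      apply stmt10_key v hLI hT hiT hiI
      simpa using hxy
    · exfalso
      have hJT : (↑(insert j I : Finset (Fin n)) : Set (Fin n)) ⊆
          ↑(insert i (insert j I) : Finset (Fin n)) := by
        intro m hm; simp only [Finset.coe_insert, Set.mem_insert_iff] at hm ⊢; tauto
      have hiJ : i ∉ (↑(insert j I : Finset (Fin n)) : Set (Fin n)) := by
        simp [hij, hiI]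
      apply stmt10_key v hLI hJT hiT hiJ
      have h1 : v i + v j ∈ Submodule.span (ZMod 2) (v '' ↑(insert j I : Finset (Fin n))) := by
        apply Submodule.span_mono (Set.image_mono (f := v) (by
          intro m hm; simp only [Finset.coe_insert, Set.mem_insert_iff]; right; exact hm))
        simpa using hxy
      have h2 : v j ∈ Submodule.span (ZMod 2) (v '' ↑(insert j I : Finset (Fin n))) :=
        Submodule.subset_span ⟨j, by simp, rfl⟩
      have h3 := Submodule.add_mem _ h1 h2
      have heq : v i + v j + v j = v i := by
        ext t
        have : ∀ p q : ZMod 2, p + q + q = p := by decide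
        simpa using this (v i t) (v j t)
      rwa [heq] at h3
  -- independence of {v₀, v i} modulo S
  have zeroInd : ∀ i : Fin n, i ∉ I →
      LinearIndependent (ZMod 2)
        (fun m : Option ↥(insert i I : Finset (Fin n)) => m.elim v₀ (fun j => v j)) →
      ∀ x y : ZMod 2, x • v₀ + y • v i ∈ S → x = 0 ∧ y = 0 := by
    intro i hiI hLI x y hxy
    obtain ⟨hLI', hsp⟩ := linearIndependent_option.mp hLI
    have hsp' : v₀ ∉ Submodule.span (ZMod 2) (v '' ↑(insert i I : Finset (Fin n))) := by
      rw [Set.image_eq_range]; exact hsp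
    clear hsp
    have hsp := hsp'
    have hSle : S ≤ Submodule.span (ZMod 2) (v '' ↑(insert i I : Finset (Fin n))) := by
      apply Submodule.span_mono (Set.image_mono (f := v) (by
        intro m hm; simp only [Finset.coe_insert, Set.mem_insert_iff]; right; exact hm))
    rcases two x with rfl | rfl
    · refine ⟨rfl, ?_⟩
      rcases two y with rfl | rfl
      · rfl
      · exfalso
        have hT : (↑I : Set (Fin n)) ⊆ ↑(insert i I : Finset (Fin n)) := by
          intro m hm; simp only [Finset.coe_insert, Set.mem_insert_iff]; right; exact hm
        apply stmt10_key v hLI' hT (by simp) hiI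
        simpa using hxy
    · exfalso
      apply hsp
      have h1 : v₀ + y • v i ∈ Submodule.span (ZMod 2)
          (v '' ↑(insert i I : Finset (Fin n))) := by
        apply hSle; simpa using hxy
      have h2 : y • v i ∈ Submodule.span (ZMod 2)
          (v '' ↑(insert i I : Finset (Fin n))) :=
        Submodule.smul_mem _ _ (Submodule.subset_span ⟨i, by simp, rfl⟩)
      have h3 := Submodule.add_mem _ h1 h2
      have heq : v₀ + y • v i + y • v i = v₀ := by
        ext t
        have : ∀ p q : ZMod 2, p + q + q = p := by decide
        simpa using this (v₀ t) ((y • v i) t)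
      rwa [heq] at h3
  -- every vector can be written as x • v a + y • v b modulo S
  have hmem : ∀ w : Fin r → ZMod 2,
      w ∈ Submodule.span (ZMod 2) (insert (v a) (insert (v b) (v '' ↑I))) := by
    intro w
    have hspan := (hpair a b (by simp) (by simp) hab).2
    have hr : Set.range (fun m : ↥(insert a (insert b I) : Finset (Fin n)) => v m) =
        v '' ↑(insert a (insert b I) : Finset (Fin n)) :=
      (Set.image_eq_range v ↑(insert a (insert b I) : Finset (Fin n))).symm
    have himg : v '' ↑(insert a (insert b I) : Finset (Fin n)) =
        insert (v a) (insert (v b) (v '' ↑I)) := by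
      rw [Finset.coe_insert, Finset.coe_insert, Set.image_insert_eq, Set.image_insert_eq]
    rw [← himg, ← hr, hspan]
    trivial
  have rep : ∀ w : Fin r → ZMod 2, ∃ x y : ZMod 2, w + x • v a + y • v b ∈ S := by
    intro w
    obtain ⟨x, z, hz, hw⟩ := Submodule.mem_span_insert.mp (hmem w)
    obtain ⟨y, s, hs, hz'⟩ := Submodule.mem_span_insert.mp hz
    refine ⟨x, y, ?_⟩
    have heq : w + x • v a + y • v b = s := by
      subst hw; subst hz'
      ext t
      have : ∀ p q u : ZMod 2, p + (q + u) + p + q = u := by decide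
      simpa using this ((x • v a) t) ((y • v b) t) (s t)
    rwa [heq]
  -- v a + v b + v c ∈ S
  obtain ⟨x, y, hc1⟩ := rep (v c)
  have hx1 : x = 1 := by
    rcases two x with rfl | rfl
    · exfalso
      have hmem' : y • v b + (1 : ZMod 2) • v c ∈ S := by
        have heq : y • v b + (1 : ZMod 2) • v c = v c + (0 : ZMod 2) • v a + y • v b := by
          ext t
          have : ∀ p q : ZMod 2, q + 1 * p = p + 0 + q := by decide
          simpa using this (v c t) ((y • v b) t)
        rw [heq]; exact hc1
      exact one_ne_zero ((pairInd b c hbI hcI hbc (hpair b c (by simp) (by simp) hbc).1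
        y 1 hmem').2)
    · rfl
  have hy1 : y = 1 := by
    rcases two y with rfl | rfl
    · exfalso
      have hmem' : x • v a + (1 : ZMod 2) • v c ∈ S := by
        have heq : x • v a + (1 : ZMod 2) • v c = v c + x • v a + (0 : ZMod 2) • v b := by
          ext t
          have : ∀ p q : ZMod 2, q + 1 * p = p + q + 0 := by decide
          simpa using this (v c t) ((x • v a) t)
        rw [heq]; exact hc1
      exact one_ne_zero ((pairInd a c haI hcI hac (hpair a c (by simp) (by simp) hac).1
        x 1 hmem').2)
    · rfl
  subst hx1; subst hy1
  have habc : v a + v b + v c ∈ S := by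
    have heq : v a + v b + v c = v c + (1 : ZMod 2) • v a + (1 : ZMod 2) • v b := by
      ext t
      have : ∀ p q u : ZMod 2, p + q + u = u + 1 * p + 1 * q := by decide
      simpa using this (v a t) (v b t) (v c t)
    rw [heq]; exact hc1
  -- v₀ + v a + v b ∈ S
  obtain ⟨x, y, h0⟩ := rep v₀
  have hy1 : y = 1 := by
    rcases two y with rfl | rfl
    · exfalso
      have hmem' : (1 : ZMod 2) • v₀ + x • v a ∈ S := by
        have heq : (1 : ZMod 2) • v₀ + x • v a = v₀ + x • v a + (0 : ZMod 2) • v b := by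
          ext t
          have : ∀ p q : ZMod 2, 1 * p + q = p + q + 0 := by decide
          simpa using this (v₀ t) ((x • v a) t)
        rw [heq]; exact h0
      exact one_ne_zero ((zeroInd a haI (hzero a (by simp)).1 1 x hmem').1)
    · rfl
  subst hy1
  have hx1 : x = 1 := by
    rcases two x with rfl | rfl
    · exfalso
      have hmem' : (1 : ZMod 2) • v₀ + (1 : ZMod 2) • v b ∈ S := by
        have heq : (1 : ZMod 2) • v₀ + (1 : ZMod 2) • v b =
            v₀ + (0 : ZMod 2) • v a + (1 : ZMod 2) • v b := by
          ext t
          have : ∀ p q : ZMod 2, 1 * p + 1 * q = p + 0 + 1 * q := by decide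
          simpa using this (v₀ t) (v b t)
        rw [heq]; exact h0
      exact one_ne_zero ((zeroInd b hbI (hzero b (by simp)).1 1 1 hmem').1)
    · rfl
  subst hx1
  -- v₀ + v c ∈ S, contradiction
  have hfinal : (1 : ZMod 2) • v₀ + (1 : ZMod 2) • v c ∈ S := by
    have h3 := Submodule.add_mem _ h0 habc
    have heq : v₀ + (1 : ZMod 2) • v a + (1 : ZMod 2) • v b + (v a + v b + v c) =
        (1 : ZMod 2) • v₀ + (1 : ZMod 2) • v c := by
      ext t
      have : ∀ p q u w : ZMod 2, p + 1 * q + 1 * u + (q + u + w) = 1 * p + 1 * w := by decide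
      simpa using this (v₀ t) (v a t) (v b t) (v c t)
    rwa [heq] at h3
  exact one_ne_zero ((zeroInd c hcI (hzero c (by simp)).1 1 1 hfinal).1)
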